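/- (Uniform fading memory property of the reservoir model.) Let ‖·‖ be a norm on ℝ^N and denote also by ‖·‖ the induced operator norm on M_N(ℝ). Let A ∈ M_N(ℝ) with ‖A‖ < 1, let g: ℝ → ℝ^N be continuous, and let k > 0. For any input signal z: ℤ → ℝ with |z(t)| ≤ k for all t, the series x_z(t) := Σ_{i=0}^∞ A^i g(z(t−i)) converges for every t ∈ ℤ. Moreover, for every ε > 0 there exist δ_ε > 0 and h_ε ∈ ℕ, independent of t, such that for any t ∈ ℤ and any two input signals z, z': ℤ → ℝ bounded by k, if |z(s) − z'(s)| < δ_ε for all s ∈ [t−h_ε, t], then ‖x_z(t) − x_{z'}(t)‖ < ε. -/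

import Mathlib

section AuxNV
variable {N : ℕ} (nv : (Fin N → ℝ) → ℝ)
  (nv_smul : ∀ (a : ℝ) (v : Fin N → ℝ), nv (a • v) = |a| * nv v)
  (nv_add : ∀ v w : Fin N → ℝ, nv (v + w) ≤ nv v + nv w)

include nv_smul

lemma aux_nv_zero : nv 0 = 0 := by
  have := nv_smul 0 0; simpa using this

lemma aux_nv_neg (v : Fin N → ℝ) : nv (-v) = nv v := by
  have := nv_smul (-1) v; simpa using this

include nv_add

lemma aux_nv_nonneg (v : Fin N → ℝ) : 0 ≤ nv v := by
  have h := nv_add v (-v)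
  rw [add_neg_cancel, aux_nv_zero nv nv_smul, aux_nv_neg nv nv_smul] at h
  linarith

omit nv_smul in
lemma aux_nv_sub_le (v w : Fin N → ℝ) : nv v - nv w ≤ nv (v - w) := by
  have h := nv_add (v - w) w
  simp only [sub_add_cancel] at h
  linarith

lemma aux_nv_sum {ι : Type*} (s : Finset ι) (f : ι → Fin N → ℝ) :
    nv (∑ i ∈ s, f i) ≤ ∑ i ∈ s, nv (f i) := by
  classical
  induction s using Finset.induction_on with
  | empty => simp [aux_nv_zero nv nv_smul]
  | insert a s hnot ih =>
    rw [Finset.sum_insert hnot, Finset.sum_insert hnot]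
    exact le_trans (nv_add _ _) (by linarith)

lemma aux_nv_le_norm : ∃ C : ℝ, 0 ≤ C ∧ ∀ v : Fin N → ℝ, nv v ≤ C * ‖v‖ := by
  classical
  set e : Fin N → (Fin N → ℝ) := fun j i => if j = i then 1 else 0 with he
  refine ⟨∑ j : Fin N, nv (e j), Finset.sum_nonneg fun j _ =>
    aux_nv_nonneg nv nv_smul nv_add _, fun v => ?_⟩
  have hv : v = ∑ j : Fin N, v j • e j := pi_eq_sum_univ v
  calc nv v = nv (∑ j : Fin N, v j • e j) := by rw [← hv]
    _ ≤ ∑ j : Fin N, nv (v j • e j) := aux_nv_sum nv nv_smul nv_add _ _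
    _ ≤ ∑ j : Fin N, nv (e j) * ‖v‖ := by
        refine Finset.sum_le_sum fun j _ => ?_
        rw [nv_smul, mul_comm]
        exact mul_le_mul_of_nonneg_left (by simpa using norm_le_pi_norm v j)
          (aux_nv_nonneg nv nv_smul nv_add _)
    _ = (∑ j : Fin N, nv (e j)) * ‖v‖ := by rw [Finset.sum_mul]

lemma aux_nv_continuous : Continuous nv := by
  obtain ⟨C, hC0, hC⟩ := aux_nv_le_norm nv nv_smul nv_add
  rw [Metric.continuous_iff]
  intro v ε hε
  refine ⟨ε / (C + 1), by positivity, fun w hw => ?_⟩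
  have h1 : nv (w - v) ≤ C * ‖w - v‖ := hC _
  have h2 : nv (v - w) ≤ C * ‖v - w‖ := hC _
  have h3 := aux_nv_sub_le nv nv_add w v
  have h4 := aux_nv_sub_le nv nv_add v w
  have hdist : ‖w - v‖ < ε / (C + 1) := by rwa [← dist_eq_norm]
  have hdist' : ‖v - w‖ < ε / (C + 1) := by rwa [norm_sub_rev]
  have hn : (0:ℝ) ≤ ‖w - v‖ := norm_nonneg _
  have hn' : (0:ℝ) ≤ ‖v - w‖ := norm_nonneg _
  have key : C * ‖w - v‖ < ε := by
    calc C * ‖w - v‖ ≤ (C + 1) * ‖w - v‖ := by nlinarith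
      _ < (C + 1) * (ε / (C + 1)) := by
          exact mul_lt_mul_of_pos_left hdist (by linarith)
      _ = ε := by field_simp
  have key' : C * ‖v - w‖ < ε := by
    calc C * ‖v - w‖ ≤ (C + 1) * ‖v - w‖ := by nlinarith
      _ < (C + 1) * (ε / (C + 1)) := mul_lt_mul_of_pos_left hdist' (by linarith)
      _ = ε := by field_simp
  rw [Real.dist_eq, abs_lt]
  constructor <;> linarith

lemma aux_nv_lower (nv_def : ∀ v : Fin N → ℝ, nv v = 0 ↔ v = 0) :
    ∃ m : ℝ, 0 < m ∧ ∀ v : Fin N → ℝ, m * ‖v‖ ≤ nv v := by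
  by_cases htriv : ∀ v : Fin N → ℝ, v = 0
  · exact ⟨1, one_pos, fun v => by
      rw [htriv v]; simp [aux_nv_zero nv nv_smul]⟩
  push_neg at htriv
  obtain ⟨v0, hv0⟩ := htriv
  have hsph : (Metric.sphere (0 : Fin N → ℝ) 1).Nonempty := by
    refine ⟨‖v0‖⁻¹ • v0, ?_⟩
    simp [norm_smul, norm_ne_zero_iff.mpr hv0,
      inv_mul_cancel₀ (norm_ne_zero_iff.mpr hv0)]
  obtain ⟨u, hu, humin⟩ := (isCompact_sphere (0 : Fin N → ℝ) 1).exists_isMinOn hsph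
    ((aux_nv_continuous nv nv_smul nv_add).continuousOn)
  have huns : ‖u‖ = 1 := by simpa using hu
  have hupos : 0 < nv u := by
    rcases lt_or_eq_of_le (aux_nv_nonneg nv nv_smul nv_add u) with h | h
    · exact h
    · exfalso
      have : u = 0 := (nv_def u).mp h.symm
      rw [this] at huns; simp at huns
  refine ⟨nv u, hupos, fun v => ?_⟩
  by_cases hv : v = 0
  · simp [hv, aux_nv_zero nv nv_smul]
  · have hnv : (0:ℝ) < ‖v‖ := norm_pos_iff.mpr hv
    have hmem : ‖v‖⁻¹ • v ∈ Metric.sphere (0 : Fin N → ℝ) 1 := by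
      simp [norm_smul, abs_of_pos (inv_pos.mpr hnv), inv_mul_cancel₀ hnv.ne']
    have h5 : nv u ≤ nv (‖v‖⁻¹ • v) := humin hmem
    rw [nv_smul] at h5
    rw [abs_of_pos (inv_pos.mpr hnv)] at h5
    have : nv u * ‖v‖ ≤ (‖v‖⁻¹ * nv v) * ‖v‖ :=
      mul_le_mul_of_nonneg_right h5 (norm_nonneg v)
    calc nv u * ‖v‖ ≤ (‖v‖⁻¹ * nv v) * ‖v‖ := this
      _ = nv v := by field_simp

end AuxNV



/-- **uniform fading memory property of the reservoir model.**
Let `nv` be a norm on `ℝᴺ` and suppose the induced operator norm of `A` is `< 1`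
(encoded by a constant `0 ≤ c < 1` with `nv (A v) ≤ c * nv v` for all `v`).  Let
`g : ℝ → ℝᴺ` be continuous and `k > 0`.  Then for every input `z` bounded by `k`
the series `x_z(t) := Σ_{i=0}^∞ Aⁱ g(z(t−i))` converges, and for every `ε > 0`
there are `δ_ε > 0` and `h_ε ∈ ℕ`, independent of `t`, such that whenever two
inputs bounded by `k` satisfy `|z(s) − z'(s)| < δ_ε` for all `s ∈ [t−h_ε, t]`,
the corresponding outputs satisfy `nv (x_z(t) − x_{z'}(t)) < ε`. -/
theorem reservoir_model_uniform_fading_memory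
    {N : ℕ} (nv : (Fin N → ℝ) → ℝ)
    (nv_def : ∀ v : Fin N → ℝ, nv v = 0 ↔ v = 0)
    (nv_smul : ∀ (a : ℝ) (v : Fin N → ℝ), nv (a • v) = |a| * nv v)
    (nv_add : ∀ v w : Fin N → ℝ, nv (v + w) ≤ nv v + nv w)
    (A : Matrix (Fin N) (Fin N) ℝ) (c : ℝ) (hc0 : 0 ≤ c) (hc1 : c < 1)
    (hAop : ∀ v : Fin N → ℝ, nv (A.mulVec v) ≤ c * nv v)
    (g : ℝ → Fin N → ℝ) (hg : Continuous g) (k : ℝ) (hk : 0 < k) :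
    (∀ z : ℤ → ℝ, (∀ t : ℤ, |z t| ≤ k) → ∀ t : ℤ,
        Summable (fun i : ℕ => (A ^ i).mulVec (g (z (t - i))))) ∧
    (∀ ε : ℝ, 0 < ε → ∃ δ : ℝ, 0 < δ ∧ ∃ h : ℕ,
      ∀ (t : ℤ) (z z' : ℤ → ℝ), (∀ u : ℤ, |z u| ≤ k) → (∀ u : ℤ, |z' u| ≤ k) →
        (∀ s : ℤ, t - h ≤ s → s ≤ t → |z s - z' s| < δ) →
        nv ((∑' i : ℕ, (A ^ i).mulVec (g (z (t - i))))
            - ∑' i : ℕ, (A ^ i).mulVec (g (z' (t - i)))) < ε) := by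
  have nv0 : nv 0 = 0 := aux_nv_zero nv nv_smul
  have nvneg : ∀ v, nv (-v) = nv v := aux_nv_neg nv nv_smul
  have nvpos : ∀ v, 0 ≤ nv v := aux_nv_nonneg nv nv_smul nv_add
  have nvsum : ∀ {ι : Type} (s : Finset ι) (f : ι → Fin N → ℝ),
      nv (∑ i ∈ s, f i) ≤ ∑ i ∈ s, nv (f i) := fun s f => aux_nv_sum nv nv_smul nv_add s f
  have nvcont : Continuous nv := aux_nv_continuous nv nv_smul nv_add
  obtain ⟨m, hm, hml⟩ := aux_nv_lower nv nv_smul nv_add nv_def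
  -- bound M on nv (g x) for |x| ≤ k
  obtain ⟨x0, _, hx0max⟩ := (isCompact_Icc (a := -k) (b := k)).exists_isMaxOn
    ⟨0, by constructor <;> linarith⟩ ((nvcont.comp hg).continuousOn)
  set M : ℝ := nv (g x0) with hMdef
  have hM0 : 0 ≤ M := nvpos _
  have hM : ∀ x : ℝ, |x| ≤ k → nv (g x) ≤ M := by
    intro x hx
    exact hx0max (by rw [Set.mem_Icc]; rw [abs_le] at hx; exact hx)
  -- power bound
  have hpow : ∀ (i : ℕ) (v : Fin N → ℝ), nv ((A ^ i).mulVec v) ≤ c ^ i * nv v := by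
    intro i
    induction i with
    | zero => intro v; simp [Matrix.one_mulVec]
    | succ n ih =>
      intro v
      have : (A ^ (n + 1)).mulVec v = A.mulVec ((A ^ n).mulVec v) := by
        rw [Matrix.mulVec_mulVec, ← pow_succ']
      rw [this]
      calc nv (A.mulVec ((A ^ n).mulVec v)) ≤ c * nv ((A ^ n).mulVec v) := hAop _
        _ ≤ c * (c ^ n * nv v) := mul_le_mul_of_nonneg_left (ih v) hc0
        _ = c ^ (n + 1) * nv v := by ring
  -- summability
  have hsum : ∀ (z : ℤ → ℝ), (∀ t : ℤ, |z t| ≤ k) → ∀ t : ℤ,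
      Summable (fun i : ℕ => (A ^ i).mulVec (g (z (t - i)))) := by
    intro z hz t
    apply Summable.of_norm_bounded (g := fun i : ℕ => m⁻¹ * (M * c ^ i))
      (((summable_geometric_of_lt_one hc0 hc1).mul_left M).mul_left m⁻¹)
    intro i
    have h1 : m * ‖(A ^ i).mulVec (g (z (t - i)))‖ ≤ nv ((A ^ i).mulVec (g (z (t - i)))) :=
      hml _
    have h2 : nv ((A ^ i).mulVec (g (z (t - i)))) ≤ c ^ i * M := by
      calc nv ((A ^ i).mulVec (g (z (t - i)))) ≤ c ^ i * nv (g (z (t - i))) := hpow i _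
        _ ≤ c ^ i * M := mul_le_mul_of_nonneg_left (hM _ (hz _)) (pow_nonneg hc0 i)
    have h3 : m * ‖(A ^ i).mulVec (g (z (t - i)))‖ ≤ c ^ i * M := le_trans h1 h2
    calc ‖(A ^ i).mulVec (g (z (t - i)))‖
        = m⁻¹ * (m * ‖(A ^ i).mulVec (g (z (t - i)))‖) := by field_simp
      _ ≤ m⁻¹ * (c ^ i * M) := mul_le_mul_of_nonneg_left h3 (inv_nonneg.mpr hm.le)
      _ = m⁻¹ * (M * c ^ i) := by ring
  refine ⟨hsum, ?_⟩
  intro ε hε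
  -- choose h
  have hXpos : 0 < (ε / 2) * (1 - c) / (2 * M + 1) := by
    apply div_pos (mul_pos (by linarith) (by linarith)) (by linarith)
  obtain ⟨n, hn⟩ := exists_pow_lt_of_lt_one hXpos hc1
  set ε' : ℝ := ε / (2 * (n + 1)) with hε'def
  have hε'pos : 0 < ε' := by positivity
  -- uniform continuity of (x,y) ↦ nv (g x - g y) on the compact square
  set F : ℝ × ℝ → ℝ := fun p => nv (g p.1 - g p.2) with hFdef
  have hFcont : Continuous F :=
    nvcont.comp ((hg.comp continuous_fst).sub (hg.comp continuous_snd))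
  have hUC : UniformContinuousOn F (Set.Icc (-k) k ×ˢ Set.Icc (-k) k) :=
    (isCompact_Icc.prod isCompact_Icc).uniformContinuousOn_of_continuous
      hFcont.continuousOn
  rw [Metric.uniformContinuousOn_iff] at hUC
  obtain ⟨δ, hδpos, hδ⟩ := hUC ε' hε'pos
  have hgδ : ∀ x y : ℝ, |x| ≤ k → |y| ≤ k → |x - y| < δ → nv (g x - g y) < ε' := by
    intro x y hx hy hxy
    have hxm : x ∈ Set.Icc (-k) k := by rw [Set.mem_Icc]; rw [abs_le] at hx; exact hx
    have hym : y ∈ Set.Icc (-k) k := by rw [Set.mem_Icc]; rw [abs_le] at hy; exact hy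
    have h1 := hδ (x, y) (Set.mk_mem_prod hxm hym) (x, x) (Set.mk_mem_prod hxm hxm)
      (by rw [Prod.dist_eq]; simp [Real.dist_eq]; rw [abs_sub_comm]; exact hxy)
    have hFxx : F (x, x) = 0 := by simp [hFdef, nv0]
    rw [Real.dist_eq, hFxx, sub_zero] at h1
    calc nv (g x - g y) ≤ |F (x, y)| := le_abs_self _
      _ < ε' := h1
  refine ⟨δ, hδpos, n, ?_⟩
  intro t z z' hz hz' hclose
  set f : ℕ → Fin N → ℝ := fun i => (A ^ i).mulVec (g (z (t - i))) with hf
  set f' : ℕ → Fin N → ℝ := fun i => (A ^ i).mulVec (g (z' (t - i))) with hf'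
  set d : ℕ → Fin N → ℝ := fun i => (A ^ i).mulVec (g (z (t - i)) - g (z' (t - i))) with hd
  have hd_eq : ∀ i, d i = f i - f' i := by
    intro i; simp only [hd, hf, hf', Matrix.mulVec_sub]
  have hsumz := hsum z hz t
  have hsumz' := hsum z' hz' t
  have hdsum : Summable d := by
    rw [show d = fun i => f i - f' i from funext hd_eq]
    exact hsumz.sub hsumz'
  have htsub : (∑' i : ℕ, f i) - ∑' i : ℕ, f' i = ∑' i : ℕ, d i := by
    rw [← Summable.tsum_sub hsumz hsumz']
    exact tsum_congr fun i => (hd_eq i).symm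
  -- bound on nv (d i)
  have hdb : ∀ i : ℕ, nv (d i) ≤ c ^ i * (2 * M) := by
    intro i
    calc nv (d i) ≤ c ^ i * nv (g (z (t - i)) - g (z' (t - i))) := hpow i _
      _ ≤ c ^ i * (2 * M) := by
          apply mul_le_mul_of_nonneg_left _ (pow_nonneg hc0 i)
          have h1 : nv (g (z (t - i)) - g (z' (t - i))) ≤
              nv (g (z (t - i))) + nv (-(g (z' (t - i)))) := by
            rw [sub_eq_add_neg]; exact nv_add _ _
          rw [nvneg] at h1
          have := hM _ (hz (t - i)); have := hM _ (hz' (t - i))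
          linarith
  have hdb' : ∀ i : ℕ, i ≤ n → nv (d i) < ε' := by
    intro i hi
    have hs1 : t - (n:ℤ) ≤ t - (i:ℤ) := by omega
    have hs2 : t - (i:ℤ) ≤ t := by omega
    have hzz := hclose (t - i) hs1 hs2
    have h1 : nv (g (z (t - i)) - g (z' (t - i))) < ε' :=
      hgδ _ _ (hz _) (hz' _) hzz
    calc nv (d i) ≤ c ^ i * nv (g (z (t - i)) - g (z' (t - i))) := hpow i _
      _ ≤ 1 * nv (g (z (t - i)) - g (z' (t - i))) :=
          mul_le_mul_of_nonneg_right (pow_le_one₀ hc0 hc1.le) (nvpos _)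
      _ = nv (g (z (t - i)) - g (z' (t - i))) := one_mul _
      _ < ε' := h1
  -- split head and tail
  have hsplit : (∑' i : ℕ, d i) =
      (∑ i ∈ Finset.range (n + 1), d i) + ∑' j : ℕ, d (j + (n + 1)) :=
    (Summable.sum_add_tsum_nat_add (n + 1) hdsum).symm
  -- head bound
  have hhead : nv (∑ i ∈ Finset.range (n + 1), d i) < ε / 2 := by
    calc nv (∑ i ∈ Finset.range (n + 1), d i) ≤ ∑ i ∈ Finset.range (n + 1), nv (d i) :=
        nvsum _ _
      _ < ∑ i ∈ Finset.range (n + 1), ε' := by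
          apply Finset.sum_lt_sum_of_nonempty ⟨0, Finset.mem_range.mpr (Nat.succ_pos n)⟩
          intro i hi
          exact hdb' i (Nat.lt_succ_iff.mp (Finset.mem_range.mp hi))
      _ = (n + 1 : ℝ) * ε' := by rw [Finset.sum_const, Finset.card_range]; push_cast; ring
      _ = ε / 2 := by rw [hε'def]; field_simp
  -- tail bound
  have hgeo : ∀ nn : ℕ, (∑ j ∈ Finset.range nn, c ^ j) ≤ (1 - c)⁻¹ := by
    intro nn
    calc (∑ j ∈ Finset.range nn, c ^ j) ≤ ∑' j : ℕ, c ^ j :=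
        Summable.sum_le_tsum _ (fun i _ => pow_nonneg hc0 i) (summable_geometric_of_lt_one hc0 hc1)
      _ = (1 - c)⁻¹ := tsum_geometric_of_lt_one hc0 hc1
  have hcn1 : c ^ (n + 1) ≤ c ^ n := pow_le_pow_of_le_one hc0 hc1.le (Nat.le_succ n)
  have htailconst : 2 * M * c ^ (n + 1) * (1 - c)⁻¹ ≤ ε / 2 := by
    have h1c : 0 < 1 - c := by linarith
    have hXlt : c ^ (n + 1) < (ε / 2) * (1 - c) / (2 * M + 1) := lt_of_le_of_lt hcn1 hn
    rw [lt_div_iff₀ (by linarith : (0:ℝ) < 2 * M + 1)] at hXlt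
    have hx0 : 0 ≤ c ^ (n + 1) := pow_nonneg hc0 _
    have h2 : 2 * M * c ^ (n + 1) ≤ ε / 2 * (1 - c) := by nlinarith
    calc 2 * M * c ^ (n + 1) * (1 - c)⁻¹ ≤ (ε / 2 * (1 - c)) * (1 - c)⁻¹ :=
        mul_le_mul_of_nonneg_right h2 (inv_nonneg.mpr h1c.le)
      _ = ε / 2 := by field_simp
  have htail : nv (∑' j : ℕ, d (j + (n + 1))) ≤ ε / 2 := by
    have htsummable : Summable (fun j : ℕ => d (j + (n + 1))) :=
      (summable_nat_add_iff (n + 1)).mpr hdsum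
    have htendsto : Filter.Tendsto
        (fun nn : ℕ => nv (∑ j ∈ Finset.range nn, d (j + (n + 1)))) Filter.atTop
        (nhds (nv (∑' j : ℕ, d (j + (n + 1))))) :=
      (nvcont.tendsto _).comp htsummable.hasSum.tendsto_sum_nat
    apply le_of_tendsto htendsto
    apply Filter.Eventually.of_forall
    intro nn
    calc nv (∑ j ∈ Finset.range nn, d (j + (n + 1)))
        ≤ ∑ j ∈ Finset.range nn, nv (d (j + (n + 1))) := nvsum _ _
      _ ≤ ∑ j ∈ Finset.range nn, c ^ (j + (n + 1)) * (2 * M) :=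
          Finset.sum_le_sum fun j _ => hdb _
      _ = 2 * M * c ^ (n + 1) * ∑ j ∈ Finset.range nn, c ^ j := by
          rw [Finset.mul_sum]
          exact Finset.sum_congr rfl fun j _ => by rw [pow_add]; ring
      _ ≤ 2 * M * c ^ (n + 1) * (1 - c)⁻¹ := by
          apply mul_le_mul_of_nonneg_left (hgeo nn) (by positivity)
      _ ≤ ε / 2 := htailconst
  rw [htsub, hsplit]
  calc nv ((∑ i ∈ Finset.range (n + 1), d i) + ∑' j : ℕ, d (j + (n + 1)))
      ≤ nv (∑ i ∈ Finset.range (n + 1), d i) + nv (∑' j : ℕ, d (j + (n + 1))) := nv_add _ _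
    _ < ε / 2 + ε / 2 := by
        apply add_lt_add_of_lt_of_le hhead htail
    _ = ε := by ring
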